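/- Let p, q be positive integers with q < p, r = p/q > 1, and let (cᵢ)_{i=1..N} be nonzero complex numbers with sᵢ ∈ ℕ. Suppose the multiset M in ℂ∖{0} consisting of the q-th powers of the roots of each polynomial Rᵢ(ζ) = cᵢζ^p − rζ^q + (r−1) taken with multiplicity sᵢ, together with n ≥ 0 copies of the number (r−1)/r, is invariant under taking inverses z ↦ 1/z. If p > 2q then one obtains a contradiction; hence necessarily r ≤ 2. -/

import Mathlib

open Polynomial

lemma exists_fn (s : Multiset ℂ) : ∃ f : Fin (Multiset.card s) → ℂ, (Finset.univ.val.map f) = s := by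
  induction s using Quotient.inductionOn with
  | h l =>
    refine ⟨fun i => l.get (Fin.cast (by simp) i), ?_⟩
    have h1 : (Finset.univ.val : Multiset (Fin (Multiset.card (l : Multiset ℂ)))) = ((List.finRange (Multiset.card (l : Multiset ℂ)) : List (Fin _)) : Multiset _) := by
      rfl
    show Multiset.map (fun i : Fin (Multiset.card (l : Multiset ℂ)) => l.get (Fin.cast (by simp) i)) Finset.univ.val = (l : Multiset ℂ)
    rw [h1, Multiset.map_coe]
    show ((List.map _ _ : List ℂ) : Multiset ℂ) = _
    congr 1
    exact List.map_get_finRange l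

lemma newton_multiset (s : Multiset ℂ) (k : ℕ) (hk : 0 < k)
    (h : ∀ i, 0 < i → i < k → s.esymm i = 0) :
    (s.map (fun z => z ^ k)).sum = (-1) ^ (k + 1) * k * s.esymm k := by
  obtain ⟨f, hf⟩ := exists_fn s
  have H := congrArg (MvPolynomial.aeval f)
    (MvPolynomial.psum_eq_mul_esymm_sub_sum (Fin (Multiset.card s)) ℂ k hk)
  simp only [MvPolynomial.psum, map_sum, map_sub, map_mul, map_pow, map_neg, map_one,
    map_natCast, MvPolynomial.aeval_X, MvPolynomial.aeval_esymm_eq_multiset_esymm, hf] at H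
  have hsum : ∑ a ∈ Finset.HasAntidiagonal.antidiagonal k with a.1 ∈ Set.Ioo 0 k,
      (-1 : ℂ) ^ a.1 * s.esymm a.1 * ∑ i, f i ^ a.2 = 0 := by
    apply Finset.sum_eq_zero
    intro a ha
    simp only [Finset.mem_filter, Set.mem_Ioo] at ha
    rw [h a.1 ha.2.1 ha.2.2, mul_zero, zero_mul]
  rw [hsum, sub_zero] at H
  have h2 : (Multiset.map (fun z => z ^ k) (Multiset.map f Finset.univ.val)).sum
      = ∑ x, f x ^ k := by
    rw [Multiset.map_map]; rfl
  rw [hf] at h2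
  rw [h2, H]

section
variable (c rc : ℂ) (p q : ℕ)

noncomputable def PP : ℂ[X] := C c * X ^ p - C rc * X ^ q + C (rc - 1)

lemma PP_natDegree (hc : c ≠ 0) (hq : 0 < q) (hqp : q < p) : (PP c rc p q).natDegree = p := by
  unfold PP
  compute_degree! <;> simp [hqp.le, hqp.ne', (hq.trans hqp).ne', hc]

lemma PP_coeff (k : ℕ) : (PP c rc p q).coeff k =
    (if k = p then c else 0) - (if k = q then rc else 0) + (if k = 0 then rc - 1 else 0) := by
  unfold PP
  simp only [coeff_add, coeff_sub, coeff_C_mul, coeff_X_pow, coeff_C, mul_ite, mul_one, mul_zero]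

lemma PP_leadingCoeff (hc : c ≠ 0) (hq : 0 < q) (hqp : q < p) :
    (PP c rc p q).leadingCoeff = c := by
  rw [leadingCoeff, PP_natDegree c rc p q hc hq hqp, PP_coeff]
  simp [(hq.trans hqp).ne', hqp.ne']

lemma PP_ne_zero (hc : c ≠ 0) (hq : 0 < q) (hqp : q < p) : PP c rc p q ≠ 0 := by
  intro h
  have := PP_leadingCoeff c rc p q hc hq hqp
  rw [h] at this
  exact hc (by simpa using this.symm)

lemma PP_card_roots (hc : c ≠ 0) (hq : 0 < q) (hqp : q < p) :
    Multiset.card (PP c rc p q).roots = p := by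
  have h := splits_iff_card_roots.mp (IsAlgClosed.splits (PP c rc p q))
  rwa [PP_natDegree c rc p q hc hq hqp] at h

lemma PP_esymm_eq (hc : c ≠ 0) (hq : 0 < q) (hqp : q < p) (i : ℕ) (hi : i ≤ p) :
    (PP c rc p q).coeff (p - i) = c * (-1) ^ i * (PP c rc p q).roots.esymm i := by
  have h := Polynomial.coeff_eq_esymm_roots_of_splits (IsAlgClosed.splits (PP c rc p q))
    (k := p - i) (by rw [PP_natDegree c rc p q hc hq hqp]; omega)
  rw [PP_natDegree c rc p q hc hq hqp, PP_leadingCoeff c rc p q hc hq hqp] at h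
  have : p - (p - i) = i := by omega
  rwa [this] at h

lemma PP_esymm_zero (hc : c ≠ 0) (hq : 0 < q) (hqp : q < p) (i : ℕ)
    (hi0 : 0 < i) (hip : i < p) (hiq : i ≠ p - q) :
    (PP c rc p q).roots.esymm i = 0 := by
  have h := PP_esymm_eq c rc p q hc hq hqp i hip.le
  rw [PP_coeff] at h
  have h1 : ¬ (p - i = p) := by omega
  have h2 : ¬ (p - i = q) := by omega
  have h3 : ¬ (p - i = 0) := by omega
  simp only [h1, h2, h3, if_false, sub_zero, add_zero, zero_sub, neg_zero] at h
  have h' := h.symm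
  simpa [mul_eq_zero, hc] using h'

lemma PP_psum_q (hc : c ≠ 0) (hq : 0 < q) (h2 : 2 * q < p) :
    ((PP c rc p q).roots.map (fun ζ => ζ ^ q)).sum = 0 := by
  have hqp : q < p := by omega
  rw [newton_multiset _ q hq (fun i hi0 hiq =>
    PP_esymm_zero c rc p q hc hq hqp i hi0 (by omega) (by omega))]
  rw [PP_esymm_zero c rc p q hc hq hqp q hq hqp (by omega), mul_zero]

lemma PP_psum_pq (hc : c ≠ 0) (hq : 0 < q) (h2 : 2 * q < p) :
    ((PP c rc p q).roots.map (fun ζ => ζ ^ (p - q))).sum = (p - q : ℕ) * rc / c := by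
  have hqp : q < p := by omega
  have hk : 0 < p - q := by omega
  have hsq : ((-1 : ℂ)) ^ (p - q) * (-1) ^ (p - q) = 1 := by
    rw [← pow_add, Even.neg_one_pow ⟨p - q, rfl⟩]
  have hes : (PP c rc p q).roots.esymm (p - q) = -rc * (-1) ^ (p - q) / c := by
    have h := PP_esymm_eq c rc p q hc hq hqp (p - q) (by omega)
    have hpq : p - (p - q) = q := by omega
    rw [hpq, PP_coeff] at h
    have h1 : ¬ (q = p) := by omega
    have h3 : ¬ (q = 0) := by omega
    simp [h1, h3] at h
    field_simp
    linear_combination (-((-1:ℂ) ^ (p - q))) * h -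
      c * ((PP c rc p q).roots.esymm (p - q)) * hsq
  rw [newton_multiset _ (p - q) hk (fun i hi0 hik =>
    PP_esymm_zero c rc p q hc hq hqp i hi0 (by omega) (by omega)), hes]
  field_simp [pow_succ]
  ring_nf
  have hE : (-1 : ℂ) ^ ((p - q) * 2) = 1 := by rw [mul_comm, pow_mul, neg_one_sq, one_pow]
  rw [hE]; ring
end

section
variable (c rc : ℂ) (p q : ℕ)

lemma PP_inv_sum (hc : c ≠ 0) (hq : 0 < q) (h2 : 2 * q < p) (hrc : rc ≠ 1) :
    ((PP c rc p q).roots.map (fun ζ => (ζ ^ q)⁻¹)).sum = q * rc / (rc - 1) := by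
  have hqp : q < p := by omega
  have hrc1 : rc - 1 ≠ 0 := sub_ne_zero.mpr hrc
  have hcong : ∀ ζ ∈ (PP c rc p q).roots,
      (ζ ^ q)⁻¹ = rc / (rc - 1) + (-(c / (rc - 1))) * ζ ^ (p - q) := by
    intro ζ hζ
    have hroot : (PP c rc p q).IsRoot ζ :=
      (Polynomial.mem_roots (PP_ne_zero c rc p q hc hq hqp)).mp hζ
    have heval : c * ζ ^ p - rc * ζ ^ q + (rc - 1) = 0 := by
      simpa [PP, Polynomial.IsRoot] using hroot
    have hzne : ζ ≠ 0 := by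
      intro h0
      rw [h0] at heval
      rw [zero_pow (show p ≠ 0 by omega), zero_pow hq.ne'] at heval
      exact hrc (by linear_combination heval)
    have hqz : ζ ^ q ≠ 0 := pow_ne_zero _ hzne
    have hsplit : ζ ^ p = ζ ^ (p - q) * ζ ^ q := by
      rw [← pow_add]; congr 1; omega
    rw [hsplit] at heval
    field_simp
    linear_combination heval
  rw [Multiset.map_congr rfl hcong, Multiset.sum_map_add, Multiset.sum_map_mul_left,
    Multiset.map_const', Multiset.sum_replicate, PP_psum_pq c rc p q hc hq h2,
    PP_card_roots c rc p q hc hq hqp]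
  have hcast : ((p - q : ℕ) : ℂ) = (p : ℂ) - q := by
    push_cast [Nat.cast_sub hqp.le]; ring
  rw [hcast, nsmul_eq_mul]
  field_simp
  ring
end

lemma msum_finset {ι : Type*} (t : Finset ι) (F : ι → Multiset ℂ) :
    (∑ i ∈ t, F i).sum = ∑ i ∈ t, (F i).sum :=
  map_sum Multiset.sumAddMonoidHom F t

lemma mmap_finset {ι : Type*} (f : ℂ → ℂ) (t : Finset ι) (F : ι → Multiset ℂ) :
    (∑ i ∈ t, F i).map f = ∑ i ∈ t, (F i).map f :=
  map_sum (Multiset.mapAddMonoidHom f) F t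


/-- Let `q < p`, `r = p/q > 1`, and `c₁,…,c_N` be nonzero complex numbers
(`N ≥ 1`), `sᵢ ≥ 1` natural numbers, `n ≥ 0`. If the multiset `M` consisting of the `q`-th
powers of the roots of each `Rᵢ(ζ) = cᵢζ^p − rζ^q + (r−1)` taken with multiplicity `sᵢ`,
together with `n` copies of `(r−1)/r`, is invariant under `z ↦ 1/z`, then `p ≤ 2q`
(i.e. `r ≤ 2`). -/
theorem multiset_inverse_invariance_forces_r_le_two (p q : ℕ) (hq : 0 < q) (hpq : q < p)
    (N : ℕ) (hN : 0 < N) (c : Fin N → ℂ) (hc : ∀ i, c i ≠ 0)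
    (s : Fin N → ℕ) (hs : ∀ i, 0 < s i) (n : ℕ) (M : Multiset ℂ)
    (hM : M = (∑ i : Fin N,
        s i • (((C (c i) * X ^ p - C ((p : ℂ) / q) * X ^ q + C ((p : ℂ) / q - 1)).roots).map
          (fun ζ => ζ ^ q)))
      + n • ({((p : ℂ) / q - 1) / ((p : ℂ) / q)} : Multiset ℂ))
    (hinv : M.map (fun z => z⁻¹) = M) :
    p ≤ 2 * q := by
  by_contra hcon
  push_neg at hcon
  set rc : ℂ := (p : ℂ) / q with hrcdef
  have hq0 : (q : ℂ) ≠ 0 := Nat.cast_ne_zero.mpr hq.ne'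
  have hp0 : (p : ℂ) ≠ 0 := Nat.cast_ne_zero.mpr (by omega)
  have hrc0 : rc ≠ 0 := div_ne_zero hp0 hq0
  have hrc1 : rc ≠ 1 := by
    intro h
    rw [hrcdef, div_eq_one_iff_eq hq0] at h
    exact absurd (Nat.cast_injective h) hpq.ne'
  have hrcs : rc - 1 ≠ 0 := sub_ne_zero.mpr hrc1
  -- first computation of the sum
  have hsum1 : M.sum = (n : ℂ) * ((rc - 1) / rc) := by
    rw [hM, Multiset.sum_add, msum_finset]
    have h1 : ∀ i ∈ Finset.univ, ((s i •
        (((C (c i) * X ^ p - C rc * X ^ q + C (rc - 1)).roots).map (fun ζ => ζ ^ q)))).sum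
        = 0 := by
      intro i _
      show (s i • ((PP (c i) rc p q).roots.map (fun ζ => ζ ^ q))).sum = 0
      rw [Multiset.sum_nsmul, PP_psum_q (c i) rc p q (hc i) hq hcon, smul_zero]
    rw [Finset.sum_congr rfl h1, Finset.sum_const, smul_zero,
      Multiset.nsmul_singleton, Multiset.sum_replicate, nsmul_eq_mul, zero_add]
  -- second computation using the inverse invariance
  have hsum2 : M.sum = (∑ i : Fin N, (s i : ℂ)) * (q * rc / (rc - 1))
      + (n : ℂ) * (rc / (rc - 1)) := by
    conv_lhs => rw [← hinv]
    rw [hM, Multiset.map_add, Multiset.sum_add, mmap_finset, msum_finset]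
    have h1 : ∀ i ∈ Finset.univ, (((s i •
        (((C (c i) * X ^ p - C rc * X ^ q + C (rc - 1)).roots).map (fun ζ => ζ ^ q)))).map
          (fun z => z⁻¹)).sum = (s i : ℂ) * (q * rc / (rc - 1)) := by
      intro i _
      show ((s i • ((PP (c i) rc p q).roots.map (fun ζ => ζ ^ q))).map
        (fun z => z⁻¹)).sum = (s i : ℂ) * (q * rc / (rc - 1))
      rw [Multiset.map_nsmul, Multiset.map_map, Multiset.sum_nsmul]
      have h2 : ((PP (c i) rc p q).roots.map ((fun z : ℂ => z⁻¹) ∘ fun ζ => ζ ^ q)).sum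
          = q * rc / (rc - 1) := by
        rw [show ((fun z : ℂ => z⁻¹) ∘ fun ζ => ζ ^ q) = fun ζ => (ζ ^ q)⁻¹ from rfl]
        exact PP_inv_sum (c i) rc p q (hc i) hq hcon hrc1
      rw [h2, nsmul_eq_mul]
    rw [Finset.sum_congr rfl h1, ← Finset.sum_mul]
    congr 1
    rw [Multiset.map_nsmul, Multiset.map_singleton, Multiset.nsmul_singleton,
      Multiset.sum_replicate, nsmul_eq_mul]
    congr 1
    rw [inv_div]
  -- assemble
  set T : ℕ := ∑ i : Fin N, s i with hTdef
  have hT : 1 ≤ T := by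
    calc 1 ≤ s ⟨0, hN⟩ := hs _
    _ ≤ T := Finset.single_le_sum (f := s) (fun i _ => Nat.zero_le _) (Finset.mem_univ _)
  have hTc : (∑ i : Fin N, (s i : ℂ)) = (T : ℂ) := by rw [hTdef]; push_cast; ring
  rw [hsum1, hTc] at hsum2
  have key : (n : ℂ) * ((p : ℂ) - q) ^ 2 = (T : ℂ) * p ^ 2 * q + (n : ℂ) * p ^ 2 := by
    have hpq0 : (p : ℂ) - q ≠ 0 := by
      intro h
      rw [sub_eq_zero] at h
      exact absurd (Nat.cast_injective h) hpq.ne'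
    rw [hrcdef] at hsum2
    field_simp at hsum2
    linear_combination hsum2
  have keyN : n * (p - q) ^ 2 = T * p ^ 2 * q + n * p ^ 2 := by
    have : ((n * (p - q) ^ 2 : ℕ) : ℂ) = ((T * p ^ 2 * q + n * p ^ 2 : ℕ) : ℂ) := by
      push_cast [Nat.cast_sub hpq.le]
      linear_combination key
    exact_mod_cast this
  have h1 : (p - q) ^ 2 ≤ p ^ 2 := Nat.pow_le_pow_left (by omega) 2
  have h2 : n * (p - q) ^ 2 ≤ n * p ^ 2 := Nat.mul_le_mul_left _ h1
  have h3 : 1 ≤ p ^ 2 := Nat.one_le_pow _ _ (by omega)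
  have h4 : p ^ 2 ≤ T * p ^ 2 * q := by
    calc p ^ 2 = 1 * p ^ 2 * 1 := by ring
    _ ≤ T * p ^ 2 * q := Nat.mul_le_mul (Nat.mul_le_mul hT le_rfl) hq
  linarith
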